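/- Let u(n) denote the number of words of length n over alphabet \mathbb{Z}_q that start with a letter from J, end with a letter from J, and contain no k consecutive letters all from I (where I, J bipartition \mathbb{Z}_q), with u(n) = 0 for n \le 0. Then u(1) = |J|, u(2) = |J|^2, and for all n \ge 3, u(n) = q \cdot u(n-1) - |I|^k |J| \cdot u(n-k-1). -/

import Mathlib

namespace Stmt7Aux

variable {q : ℕ}

/-- A "good" word: nonempty, head and last letter in `J`, and no length-`k` all-`I` infix. -/
def Good (k : ℕ) (I J : Finset (Fin q)) (w : List (Fin q)) : Prop :=
  w ≠ [] ∧ (∀ a, w.head? = some a → a ∈ J) ∧ (∀ a, w.getLast? = some a → a ∈ J) ∧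
    ∀ v : List (Fin q), v.length = k → (∀ a ∈ v, a ∈ I) → ¬ v <:+: w

lemma listFinite (P : List (Fin q) → Prop) (m : ℕ) :
    Finite {w : List (Fin q) // w.length = m ∧ P w} := by
  apply Finite.of_injective
    (fun w : {w : List (Fin q) // w.length = m ∧ P w} =>
      (fun i : Fin m => w.1.get (Fin.cast w.2.1.symm i)))
  rintro ⟨a, ha, _⟩ ⟨b, hb, _⟩ h
  ext1
  apply List.ext_get (ha.trans hb.symm)
  intro i h1 h2
  exact congrFun h ⟨i, ha ▸ h1⟩

lemma card_allI (I : Finset (Fin q)) (j : ℕ) :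
    Nat.card {r : List (Fin q) // r.length = j ∧ ∀ a ∈ r, a ∈ I} = I.card ^ j := by
  have e : {r : List (Fin q) // r.length = j ∧ ∀ a ∈ r, a ∈ I} ≃ (Fin j → ↥I) :=
    { toFun := fun r i => ⟨r.1.get (Fin.cast r.2.1.symm i),
        r.2.2 _ ((List.get_mem _ _))⟩
      invFun := fun f => ⟨List.ofFn (fun i => (f i : Fin q)), by
        constructor
        · simp
        · intro a ha
          rw [List.mem_ofFn] at ha
          obtain ⟨i, rfl⟩ := ha
          exact (f i).2⟩
      left_inv := by
        rintro ⟨r, hr, hI⟩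
        ext1
        apply List.ext_get (by simp [hr])
        intro i h1 h2
        simp
      right_inv := by
        intro f
        ext i
        simp }
  rw [Nat.card_congr e]
  simp [Nat.card_eq_fintype_card]

lemma good_singleton {k : ℕ} {I J : Finset (Fin q)} (hk : 1 ≤ k) (hd : Disjoint I J)
    {b : Fin q} (hb : b ∈ J) : Good k I J [b] := by
  refine ⟨by simp, by simp_all, by simp_all, ?_⟩
  intro v hv hvI hinf
  have hs := hinf.sublist
  rcases List.sublist_singleton.mp hs  with rfl | rfl
  · simp at hv; omega
  · exact (Finset.disjoint_left.mp hd (hvI b (by simp))) hb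

lemma card_len_one {k : ℕ} {I J : Finset (Fin q)} (hk : 1 ≤ k) (hd : Disjoint I J) :
    Nat.card {w : List (Fin q) // w.length = 1 ∧ Good k I J w} = J.card := by
  have e : {w : List (Fin q) // w.length = 1 ∧ Good k I J w} ≃ ↥J :=
    { toFun := fun w => ⟨w.1.head w.2.2.1, w.2.2.2.1 _ (List.head?_eq_head _)⟩
      invFun := fun b => ⟨[b.1], by simp, good_singleton hk hd b.2⟩
      left_inv := by
        rintro ⟨w, hw, hg⟩
        obtain ⟨a, rfl⟩ := List.length_eq_one_iff.mp hw
        rfl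
      right_inv := fun b => rfl }
  rw [Nat.card_congr e, Nat.card_eq_fintype_card, Fintype.card_coe]

lemma good_append {k : ℕ} {I J : Finset (Fin q)} (hd : Disjoint I J)
    {v r : List (Fin q)} {b : Fin q}
    (hv : Good k I J v) (hrI : ∀ a ∈ r, a ∈ I) (hrlen : r.length < k) (hb : b ∈ J) :
    Good k I J (v ++ r ++ [b]) := by
  obtain ⟨hvne, hvh, hvl, hvnr⟩ := hv
  refine ⟨by simp [hvne], ?_, ?_, ?_⟩
  · intro a ha
    obtain ⟨x, v', rfl⟩ := List.exists_cons_of_ne_nil hvne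
    simp at ha
    exact ha ▸ hvh x rfl
  · intro a ha
    rw [List.getLast?_concat] at ha
    exact (Option.some_inj.mp ha) ▸ hb
  · intro s hslen hsI hinf
    have hsne : s ≠ [] := by intro h; subst h; simp at hslen; omega
    obtain ⟨t, u, hw⟩ := hinf
    rcases eq_or_ne u [] with rfl | hune
    · -- s ends with b
      rw [List.append_nil] at hw
      have : (t ++ s).getLast? = some b := by rw [hw, List.getLast?_concat]
      rw [List.getLast?_append, List.getLast?_eq_getLast hsne] at this
      simp at this
      have hbs : b ∈ s := this ▸ List.getLast_mem hsne
      exact Finset.disjoint_left.mp hd (hsI b hbs) hb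
    · -- strip the final b
      have hu' : u.dropLast ++ [u.getLast hune] = u := List.dropLast_append_getLast hune
      rw [← hu'] at hw
      have hw2 : (t ++ s ++ u.dropLast) ++ [u.getLast hune] = (v ++ r) ++ [b] := by
        rw [← hw]; simp
      have hw3 : t ++ s ++ u.dropLast = v ++ r := (List.append_inj' hw2 rfl).1
      rw [List.append_assoc] at hw3
      rcases List.append_eq_append_iff.mp hw3 with ⟨a', hva, hsa⟩ | ⟨c', _, hrc⟩
      · rcases List.append_eq_append_iff.mp hsa with ⟨m, ham, _⟩ | ⟨m, hsm, hrm⟩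
        · -- s is a prefix of a', which is a suffix of v
          exact hvnr s hslen hsI ⟨t, m, by rw [hva, ham, List.append_assoc]⟩
        · rcases eq_or_ne a' [] with rfl | hane
          · -- r = s ++ ... too long
            have hsm' : s = m := by simpa using hsm
            have := congrArg List.length hrm
            rw [← hsm'] at this
            simp [hslen] at this
            omega
          · have hlast : a'.getLast hane ∈ s := (hsm ▸ List.prefix_append a' m).sublist.mem
              (List.getLast_mem hane)
            have hJ : a'.getLast hane ∈ J := by
              apply hvl
              rw [hva, List.getLast?_append, List.getLast?_eq_getLast hane]
              simp
            exact Finset.disjoint_left.mp hd (hsI _ hlast) hJ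
      · have := congrArg List.length hrc
        simp [hslen] at this
        omega

lemma middle_eq {I J : Finset (Fin q)} (hd : Disjoint I J) {v₁ v₂ r₁ r₂ : List (Fin q)}
    (h : v₁ ++ r₁ = v₂ ++ r₂) (hlen : r₁.length ≤ r₂.length)
    (hv₁l : ∀ a, v₁.getLast? = some a → a ∈ J) (hr₂ : ∀ a ∈ r₂, a ∈ I) :
    r₁ = r₂ := by
  rcases List.append_eq_append_iff.mp h with ⟨a', h1, h2⟩ | ⟨c', h1, h2⟩
  · have hl := congrArg List.length h2
    simp at hl
    have : a' = [] := by
      have : a'.length = 0 := by omega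
      exact List.length_eq_zero_iff.mp this
    simpa [this] using h2
  · rcases eq_or_ne c' [] with rfl | hcne
    · simpa using h2.symm
    · exfalso
      have hmem : c'.getLast hcne ∈ r₂ := h2 ▸ (List.prefix_append c' r₁).sublist.mem
        (List.getLast_mem hcne)
      have hJ : c'.getLast hcne ∈ J := by
        apply hv₁l
        rw [h1, List.getLast?_append, List.getLast?_eq_getLast hcne]
        simp
      exact Finset.disjoint_left.mp hd (hr₂ _ hmem) hJ

lemma card_rec {k : ℕ} {I J : Finset (Fin q)} (hk : 1 ≤ k) (hd : Disjoint I J)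
    (hu : I ∪ J = Finset.univ) {n : ℕ} (hn : 2 ≤ n) :
    Nat.card {w : List (Fin q) // w.length = n ∧ Good k I J w} =
      ∑ j ∈ Finset.range k, I.card ^ j * J.card *
        Nat.card {w : List (Fin q) // w.length = n - 1 - j ∧ Good k I J w} := by
  classical
  set A : ℕ → Type := fun m => {w : List (Fin q) // w.length = m ∧ Good k I J w} with hA
  set B : ℕ → Type := fun j => {r : List (Fin q) // r.length = j ∧ ∀ a ∈ r, a ∈ I} with hB
  have memJ : ∀ a : Fin q, a ∉ I → a ∈ J := by
    intro a ha
    have : a ∈ I ∪ J := hu ▸ Finset.mem_univ a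
    simpa [Finset.mem_union, ha] using this
  -- the map
  have hlenpos : ∀ {j : ℕ} (x : A (n - 1 - j)), 1 ≤ x.1.length := by
    rintro j ⟨w, hw, hg⟩
    exact List.length_pos_iff.mpr hg.1
  let Φ : (Σ j : Fin k, A (n - 1 - (j : ℕ)) × B (j : ℕ) × ↥J) → A n :=
    fun x => ⟨x.2.1.1 ++ x.2.2.1.1 ++ [x.2.2.2.1], by
      have h1 := x.2.1.2.1
      have h2 := hlenpos x.2.1
      have h3 := x.2.2.1.2.1
      have h4 := (x.1).2
      simp only [List.length_append, List.length_cons, List.length_nil]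
      omega, good_append hd x.2.1.2.2 x.2.2.1.2.2 (lt_of_le_of_lt (le_of_eq x.2.2.1.2.1) x.1.2) x.2.2.2.2⟩
  have hbij : Function.Bijective Φ := by
    constructor
    · rintro ⟨j₁, ⟨v₁, hv₁len, hv₁g⟩, ⟨r₁, hr₁len, hr₁I⟩, ⟨b₁, hb₁⟩⟩
        ⟨j₂, ⟨v₂, hv₂len, hv₂g⟩, ⟨r₂, hr₂len, hr₂I⟩, ⟨b₂, hb₂⟩⟩ h
      have heq : v₁ ++ r₁ ++ [b₁] = v₂ ++ r₂ ++ [b₂] := congrArg Subtype.val h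
      have heq2 : v₁ ++ r₁ = v₂ ++ r₂ := (List.append_inj' heq rfl).1
      have hbb : b₁ = b₂ := by
        have := (List.append_inj' heq rfl).2
        simpa using this
      have hr : r₁ = r₂ := by
        rcases le_total r₁.length r₂.length with hle | hle
        · exact middle_eq hd heq2 hle hv₁g.2.2.1 hr₂I
        · exact (middle_eq hd heq2.symm hle hv₂g.2.2.1 hr₁I).symm
      have hj : j₁ = j₂ := Fin.ext (by rw [← hr₁len, ← hr₂len, hr])
      subst hj
      subst hr
      subst hbb
      have hv : v₁ = v₂ := by
        have := (List.append_inj' heq2 rfl).1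
        exact this
      subst hv
      rfl
    · rintro ⟨w, hwlen, hwg⟩
      obtain ⟨hwne, hwh, hwl, hwnr⟩ := hwg
      have hw'len : w.dropLast.length = n - 1 := by simp [hwlen]
      set w' := w.dropLast with hw'
      have hw'ne : w' ≠ [] := by
        intro h
        rw [h] at hw'len
        simp at hw'len
        omega
      set b := w.getLast hwne with hbdef
      have hbJ : b ∈ J := hwl b (List.getLast?_eq_getLast hwne)
      have hsplit : w' ++ [b] = w := List.dropLast_append_getLast hwne
      set p : Fin q → Bool := fun a => decide (a ∈ I) with hp
      set d := w'.reverse.dropWhile p with hd1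
      set t := w'.reverse.takeWhile p with ht1
      set v := d.reverse with hv1
      set r := t.reverse with hr1
      have hvr : v ++ r = w' := by
        rw [hv1, hr1, ← List.reverse_append, ht1, hd1,
          List.takeWhile_append_dropWhile, List.reverse_reverse]
      have hrI : ∀ a ∈ r, a ∈ I := by
        intro a ha
        rw [hr1, List.mem_reverse] at ha
        have := List.mem_takeWhile_imp ha
        simpa [hp] using this
      have hwhead : ∀ a, w'.head? = some a → a ∈ J := by
        intro a ha
        apply hwh
        rw [← hsplit, List.head?_append, ha]
        rfl
      have hdne : d ≠ [] := by
        intro h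
        have hall : ∀ x ∈ w'.reverse, p x := List.dropWhile_eq_nil_iff.mp (hd1 ▸ h)
        have hmem : w'.head hw'ne ∈ w'.reverse := List.mem_reverse.mpr (List.head_mem hw'ne)
        have hIh : w'.head hw'ne ∈ I := by simpa [hp] using hall _ hmem
        have hJh : w'.head hw'ne ∈ J := hwhead _ (List.head?_eq_head hw'ne)
        exact Finset.disjoint_left.mp hd hIh hJh
      have hvne : v ≠ [] := by simpa [hv1] using hdne
      have hvlast : ∀ a, v.getLast? = some a → a ∈ J := by
        intro a ha
        rw [hv1, List.getLast?_reverse] at ha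
        have hnotI := List.head_dropWhile_not p (l := w'.reverse) (by rw [← hd1]; exact hdne)
        have haeq : a = d.head hdne := by
          rw [List.head?_eq_head hdne] at ha
          exact (Option.some_inj.mp ha).symm
        apply memJ
        intro haI
        rw [haeq] at haI
        simp only [hp, decide_eq_true_eq, Bool.not_eq_true, decide_eq_false_iff_not] at hnotI
        exact hnotI haI
      have hvhead : ∀ a, v.head? = some a → a ∈ J := by
        intro a ha
        apply hwhead
        rw [← hvr, List.head?_append, ha]
        rfl
      have hvinf : v <:+: w := ⟨[], r ++ [b], by
        simp only [List.nil_append, ← List.append_assoc, hvr, hsplit]⟩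
      have hgv : Good k I J v := ⟨hvne, hvhead, hvlast,
        fun s hs hsI hinf => hwnr s hs hsI (hinf.trans hvinf)⟩
      have hjk : r.length < k := by
        by_contra hge
        push_neg at hge
        apply hwnr (r.drop (r.length - k)) (by simp; omega)
          (fun a ha => hrI a ((List.drop_suffix _ _).sublist.mem ha))
        have h1 : r.drop (r.length - k) <:+ w' := (List.drop_suffix _ _).trans ⟨v, hvr⟩
        exact h1.isInfix.trans ⟨[], [b], by simpa using hsplit⟩
      have hvlen : v.length = n - 1 - r.length := by
        have := congrArg List.length hvr
        simp only [List.length_append] at this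
        omega
      refine ⟨⟨⟨r.length, hjk⟩, ⟨v, hvlen, hgv⟩, ⟨r, rfl, hrI⟩, ⟨b, hbJ⟩⟩, ?_⟩
      apply Subtype.ext
      show v ++ r ++ [b] = w
      rw [List.append_assoc, ← hsplit, ← hvr, List.append_assoc]
  -- counting
  haveI : ∀ m, Finite (A m) := fun m => listFinite _ m
  haveI : ∀ j, Finite (B j) := fun j => listFinite _ j
  have e := Equiv.ofBijective Φ hbij
  rw [← Nat.card_congr e]
  haveI : ∀ j : Fin k, Fintype (A (n - 1 - (j : ℕ)) × B (j : ℕ) × ↥J) :=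
    fun j => Fintype.ofFinite _
  rw [Nat.card_eq_fintype_card]
  rw [Fintype.card_sigma]
  rw [← Fin.sum_univ_eq_sum_range
    (fun j => I.card ^ j * J.card * Nat.card {w : List (Fin q) // w.length = n - 1 - j ∧ Good k I J w})]
  apply Finset.sum_congr rfl
  intro j _
  rw [← Nat.card_eq_fintype_card, Nat.card_prod, Nat.card_prod, card_allI]
  have hJc : Nat.card ↥J = J.card := by
    rw [Nat.card_eq_fintype_card, Fintype.card_coe]
  rw [hJc]
  ring

lemma pred_iff {k m : ℕ} {I J : Finset (Fin q)} (hm : 1 ≤ m) (z : Fin q) (w : List (Fin q)) :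
    (w.length = m ∧ w.getD 0 z ∈ J ∧ w.getD (m - 1) z ∈ J ∧
      ¬ ∃ v : List (Fin q), v.length = k ∧ (∀ a ∈ v, a ∈ I) ∧ v <:+: w)
    ↔ (w.length = m ∧ Good k I J w) := by
  refine and_congr_right fun hl => ?_
  have hne : w ≠ [] := by
    intro h
    rw [h] at hl
    simp at hl
    omega
  have hpos : 0 < w.length := List.length_pos_iff.mpr hne
  have h0 : w.getD 0 z = w.head hne := by
    rw [List.getD_eq_getElem?_getD, List.getElem?_eq_getElem hpos,
      List.head_eq_getElem]
    rfl
  have h1 : w.getD (m - 1) z = w.getLast hne := by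
    have hlt : m - 1 < w.length := by omega
    rw [List.getD_eq_getElem?_getD, List.getElem?_eq_getElem hlt,
      List.getLast_eq_getElem]
    simp [hl]
  rw [h0, h1]
  unfold Good
  constructor
  · rintro ⟨hh, hg, hnr⟩
    refine ⟨hne, ?_, ?_, ?_⟩
    · intro a ha
      rw [List.head?_eq_head hne] at ha
      exact (Option.some_inj.mp ha) ▸ hh
    · intro a ha
      rw [List.getLast?_eq_getLast hne] at ha
      exact (Option.some_inj.mp ha) ▸ hg
    · intro v hv hvI hinf
      exact hnr ⟨v, hv, hvI, hinf⟩
  · rintro ⟨-, hh, hg, hnr⟩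
    refine ⟨hh _ (List.head?_eq_head hne), hg _ (List.getLast?_eq_getLast hne), ?_⟩
    rintro ⟨v, hv, hvI, hinf⟩
    exact hnr v hv hvI hinf

end Stmt7Aux

open Stmt7Aux in
/-- Let `u n` be the number of words of length `n` over `ℤ_q` that start
with a letter from `J`, end with a letter from `J`, and contain no `k` consecutive
letters all from `I` (where `I, J` bipartition `ℤ_q`), with `u n = 0` for `n ≤ 0`.
Then `u 1 = |J|`, `u 2 = |J|²`, and for all `n ≥ 3`,
`u n = q·u (n-1) - |I|^k·|J|·u (n-k-1)`. -/
theorem stmt7 (q k : ℕ) (hq : 2 ≤ q) (hk : 1 ≤ k)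
    (I J : Finset (Fin q)) (hI : I.Nonempty) (hJ : J.Nonempty)
    (hd : Disjoint I J) (hu : I ∪ J = Finset.univ)
    (u : ℤ → ℕ)
    (h0 : ∀ m : ℤ, m ≤ 0 → u m = 0)
    (hcard : ∀ m : ℕ, 1 ≤ m → u m = Nat.card {w : List (Fin q) //
      w.length = m ∧ w.getD 0 ⟨0, by omega⟩ ∈ J ∧ w.getD (m - 1) ⟨0, by omega⟩ ∈ J ∧
      ¬ ∃ v : List (Fin q), v.length = k ∧ (∀ a ∈ v, a ∈ I) ∧ v <:+: w}) :
    u 1 = J.card ∧ u 2 = J.card ^ 2 ∧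
      ∀ n : ℤ, 3 ≤ n →
        (u n : ℤ) = q * u (n - 1) - I.card ^ k * J.card * u (n - k - 1) := by
  set g : ℕ → ℕ := fun m => Nat.card {w : List (Fin q) // w.length = m ∧ Good k I J w}
    with hgdef
  have hg0 : g 0 = 0 := by
    haveI : IsEmpty {w : List (Fin q) // w.length = 0 ∧ Good k I J w} :=
      ⟨fun x => x.2.2.1 (List.length_eq_zero_iff.mp x.2.1)⟩
    simp [hgdef]
  have hgu : ∀ m : ℕ, 1 ≤ m → u m = g m := by
    intro m hm
    rw [hcard m hm, hgdef]
    exact Nat.card_congr (Equiv.subtypeEquivRight (pred_iff hm _))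
  have hg1 : g 1 = J.card := card_len_one hk hd
  have hrec : ∀ n : ℕ, 2 ≤ n →
      g n = ∑ j ∈ Finset.range k, I.card ^ j * J.card * g (n - 1 - j) :=
    fun n hn => card_rec hk hd hu hn
  have hq' : I.card + J.card = q := by
    have h1 := Finset.card_union_of_disjoint hd
    rw [hu, Finset.card_univ, Fintype.card_fin] at h1
    omega
  have hg2 : g 2 = J.card ^ 2 := by
    rw [hrec 2 le_rfl, Finset.sum_eq_single 0]
    · simpa [hg1] using (sq J.card).symm
    · intro b _ hb
      have : (2 : ℕ) - 1 - b = 0 := by omega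
      rw [this, hg0, mul_zero]
    · intro h
      exact absurd (Finset.mem_range.mpr (by omega)) h
  have key : ∀ N : ℕ, 3 ≤ N →
      g N + I.card ^ k * J.card * g (N - 1 - k) = (I.card + J.card) * g (N - 1) := by
    intro N hN
    obtain ⟨k', rfl⟩ : ∃ k', k = k' + 1 := ⟨k - 1, by omega⟩
    have e1 := hrec N (by omega)
    have e2 := hrec (N - 1) (by omega)
    rw [Finset.sum_range_succ'] at e1
    rw [Finset.sum_range_succ] at e2
    have hsum : ∑ j ∈ Finset.range k', I.card ^ (j + 1) * J.card * g (N - 1 - (j + 1))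
        = I.card * ∑ j ∈ Finset.range k', I.card ^ j * J.card * g (N - 1 - 1 - j) := by
      rw [Finset.mul_sum]
      apply Finset.sum_congr rfl
      intro j _
      have hj : N - 1 - (j + 1) = N - 1 - 1 - j := by omega
      rw [hj, pow_succ]
      ring
    rw [hsum] at e1
    simp only [Nat.sub_zero, pow_zero, one_mul] at e1
    rw [e1, e2]
    have hX : N - 1 - (k' + 1) = N - 1 - 1 - k' := by omega
    rw [hX]
    ring
  refine ⟨by simpa [hg1] using hgu 1 le_rfl, by simpa [hg2] using hgu 2 (by omega), ?_⟩
  intro n hn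
  set N : ℕ := n.toNat with hN
  have hN3 : 3 ≤ N := by omega
  have hun : u n = g N := by
    have : n = (N : ℤ) := by omega
    rw [this]
    exact hgu N (by omega)
  have hun1 : u (n - 1) = g (N - 1) := by
    have : n - 1 = ((N - 1 : ℕ) : ℤ) := by omega
    rw [this]
    exact hgu (N - 1) (by omega)
  have hunk : u (n - k - 1) = g (N - 1 - k) := by
    rcases le_or_gt (n - k - 1) 0 with hle | hlt
    · rw [h0 _ hle]
      have : N - 1 - k = 0 := by omega
      rw [this, hg0]
    · have : n - k - 1 = ((N - 1 - k : ℕ) : ℤ) := by omega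
      rw [this]
      exact hgu (N - 1 - k) (by omega)
  have hkey := key N hN3
  rw [hun, hun1, hunk]
  have : ((g N : ℤ)) + (I.card : ℤ) ^ k * J.card * g (N - 1 - k)
      = ((I.card : ℤ) + J.card) * g (N - 1) := by exact_mod_cast hkey
  have hqz : ((I.card : ℤ) + J.card) = (q : ℤ) := by exact_mod_cast hq'
  rw [hqz] at this
  linarith
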